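/- Let Δ ⊆ ℕ^n be a diagram of finite type, and for i ≤ n let π_{ni}: ℕ^n → ℕ^i be projection to the first i coordinates. Define A_i := π_{i,i-1}^{-1}(π_{n,i-1}(Δ)) \ π_{ni}(Δ), viewed inside ℕ^i. Then Γ := ℕ^n \ Δ equals the disjoint union over i = 0,…,n of A_i × ℕ^{n-i}, and each A_i is finite. -/

import Mathlib

/-- `Δ ⊆ ℕ^n` is a diagram if `Δ + ℕ^n ⊆ Δ`. -/
def IsDiagram {n : ℕ} (Δ : Set (Fin n → ℕ)) : Prop :=
  ∀ α ∈ Δ, ∀ β : Fin n → ℕ, α + β ∈ Δ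

/-- A diagram `Δ ⊆ ℕ^n` is of finite type if for all `i < j` and every `α ∈ Δ`
there is `a ∈ ℕ` such that the element obtained from `α` by setting the `j`-th
coordinate to `0` and adding `a` to the `i`-th coordinate is again in `Δ`. -/
def IsFiniteTypeDiagram {n : ℕ} (Δ : Set (Fin n → ℕ)) : Prop :=
  ∀ i j : Fin n, i < j → ∀ α ∈ Δ,
    ∃ a : ℕ, Function.update (Function.update α j 0) i (α i + a) ∈ Δ

/-- Truncation to the first `k` coordinates: this realizes the projection
`π_{nk} : ℕ^n → ℕ^k`, identifying `ℕ^k` with `ℕ^k × {0} ⊆ ℕ^n`. -/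
def trunc {n : ℕ} (k : ℕ) (α : Fin n → ℕ) : Fin n → ℕ :=
  fun t => if (t : ℕ) < k then α t else 0

lemma trunc_trunc {n : ℕ} (i j : ℕ) (α : Fin n → ℕ) :
    trunc i (trunc j α) = trunc (min i j) α := by
  funext t
  unfold trunc
  split_ifs <;> first | rfl | (exfalso; omega)

lemma mem_trunc_image_of_le {n : ℕ} {Δ : Set (Fin n → ℕ)} (hΔ : IsDiagram Δ) {i : ℕ}
    {x y : Fin n → ℕ} (hx : x ∈ trunc i '' Δ) (hy : trunc i y = y) (hxy : ∀ s, x s ≤ y s) :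
    y ∈ trunc i '' Δ := by
  obtain ⟨δ, hδ, hxδ⟩ := hx
  refine ⟨δ + fun s => y s - x s, hΔ δ hδ _, ?_⟩
  funext s
  by_cases h : (s : ℕ) < i
  · have hxs : x s = δ s := by
      have := congrFun hxδ s; simpa [trunc, h] using this.symm
    have hle := hxy s
    simp only [trunc, h, if_pos, Pi.add_apply]
    omega
  · have hys : y s = 0 := by
      have := congrFun hy s; simpa [trunc, h] using this.symm
    simp [trunc, h, hys]

lemma zero_tail {n : ℕ} {Δ : Set (Fin n → ℕ)} (hft : IsFiniteTypeDiagram Δ) (t : Fin n) :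
    ∀ d : ℕ, ∀ δ ∈ Δ, (t : ℕ) < n - d →
      ∃ a : ℕ, ∃ δ' ∈ Δ, (∀ s : Fin n, (s : ℕ) < n - d → s ≠ t → δ' s = δ s) ∧
        δ' t = δ t + a ∧ (∀ s : Fin n, n - d ≤ (s : ℕ) → δ' s = 0)
  | 0 => fun δ hδ _ =>
      ⟨0, δ, hδ, fun _ _ _ => rfl, by simp, fun s hs => absurd s.isLt (by omega)⟩
  | (d+1) => by
      intro δ hδ ht
      have ht' : (t : ℕ) < n - d := by omega
      obtain ⟨a, δ', hδ', heq, hta, hzero⟩ := zero_tail hft t d δ hδ ht'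
      have hj : n - (d+1) < n := by omega
      set j : Fin n := ⟨n - (d+1), hj⟩ with hjdef
      have htj : t < j := by
        rw [Fin.lt_def]; exact ht
      obtain ⟨b, hb⟩ := hft t j htj δ' hδ'
      refine ⟨a + b, _, hb, ?_, ?_, ?_⟩
      · intro s hs hst
        have hsj : s ≠ j := by
          intro hsj; rw [hsj] at hs; simp [hjdef] at hs
        rw [Function.update_of_ne hst, Function.update_of_ne hsj]
        exact heq s (by omega) hst
      · rw [Function.update_self, hta]; ring
      · intro s hs
        rcases eq_or_ne s j with hsj | hsj
        · have hst : s ≠ t := by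
            intro h; rw [hsj] at h; rw [h] at htj; exact lt_irrefl _ htj
          rw [Function.update_of_ne hst, hsj, Function.update_self]
        · have hs' : n - d ≤ (s : ℕ) := by
            have : (s : ℕ) ≠ n - (d+1) := fun h => hsj (Fin.ext h)
            omega
          have hst : s ≠ t := by
            intro h; subst h; omega
          rw [Function.update_of_ne hst, Function.update_of_ne hsj]
          exact hzero s hs'

/-- `A_i := π_{i,i-1}^{-1}(π_{n,i-1}(Δ)) \ π_{ni}(Δ)`, viewed inside
`ℕ^i = ℕ^i × {0} ⊆ ℕ^n`. -/
def hironakaA {n : ℕ} (Δ : Set (Fin n → ℕ)) (i : ℕ) : Set (Fin n → ℕ) :=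
  {β | trunc i β = β ∧ (i = 0 ∨ trunc (i - 1) β ∈ trunc (i - 1) '' Δ) ∧
    β ∉ trunc i '' Δ}

/-- The subset `A_i × ℕ^{n-i}` of `ℕ^n`. -/
def hironakaPiece {n : ℕ} (Δ : Set (Fin n → ℕ)) (i : ℕ) : Set (Fin n → ℕ) :=
  {α | trunc i α ∈ hironakaA Δ i}

/-- Hironaka's decomposition: for a diagram `Δ ⊆ ℕ^n` of finite type, the
complement `Γ = ℕ^n \ Δ` is the disjoint union over `i = 0,…,n` of the sets
`A_i × ℕ^{n-i}`, with `A_i = π_{i,i-1}^{-1}(π_{n,i-1}(Δ)) \ π_{ni}(Δ)` finite. -/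
lemma piece_disjoint {n : ℕ} {Δ : Set (Fin n → ℕ)} {i j : ℕ} (hij : i < j) :
    Disjoint (hironakaPiece Δ i) (hironakaPiece Δ j) := by
  rw [Set.disjoint_left]
  intro α h1 h2
  obtain ⟨_, h2b, _⟩ := h2
  obtain ⟨h1a, _, h1c⟩ := h1
  rcases h2b with hj0 | h2b
  · omega
  · rw [trunc_trunc, min_eq_left (by omega : j - 1 ≤ j)] at h2b
    obtain ⟨δ, hδ, hδα⟩ := h2b
    apply h1c
    refine ⟨δ, hδ, ?_⟩
    have : trunc i (trunc (j-1) δ) = trunc i (trunc (j-1) α) := by rw [hδα]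
    rw [trunc_trunc, trunc_trunc, min_eq_left (by omega : i ≤ j - 1)] at this
    exact this

theorem hironaka_decomposition {n : ℕ} (Δ : Set (Fin n → ℕ))
    (hΔ : IsDiagram Δ) (hft : IsFiniteTypeDiagram Δ) :
    (Δᶜ = ⋃ i ∈ Finset.range (n + 1), hironakaPiece Δ i) ∧
    (∀ i j : ℕ, i ≤ n → j ≤ n → i ≠ j →
      Disjoint (hironakaPiece Δ i) (hironakaPiece Δ j)) ∧
    (∀ i : ℕ, i ≤ n → (hironakaA Δ i).Finite) := by
  refine ⟨?_, ?_, ?_⟩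
  · ext α
    simp only [Set.mem_compl_iff, Set.mem_iUnion, Finset.mem_range, Finset.mem_coe]
    constructor
    · intro hα
      classical
      have hQn : trunc n α ∉ trunc n '' Δ := by
        rintro ⟨δ, hδ, hδα⟩
        apply hα
        have : δ = α := by
          funext s
          have := congrFun hδα s
          simpa [trunc, s.isLt] using this
        rwa [this] at hδ
      have hex : ∃ k, trunc k α ∉ trunc k '' Δ := ⟨n, hQn⟩
      set i := Nat.find hex with hidef
      refine ⟨i, Nat.lt_succ_of_le (Nat.find_min' hex hQn), ?_, ?_, ?_⟩
      · rw [trunc_trunc, min_self]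
      · rcases Nat.eq_zero_or_pos i with h0 | hpos
        · exact Or.inl h0
        · refine Or.inr ?_
          have hm := Nat.find_min hex (show i - 1 < i by omega)
          rw [not_not] at hm
          rwa [trunc_trunc, min_eq_left (by omega : i - 1 ≤ i)]
      · exact Nat.find_spec hex
    · rintro ⟨i, _, hmem⟩ hαΔ
      exact hmem.2.2 ⟨α, hαΔ, rfl⟩
  · intro i j _ _ hij
    rcases lt_or_gt_of_ne hij with h | h
    · exact piece_disjoint h
    · exact (piece_disjoint h).symm
  · intro i hi
    rcases Nat.eq_zero_or_pos i with h0 | hpos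
    · subst h0
      apply Set.Finite.subset (Set.finite_singleton (fun _ => 0 : Fin n → ℕ))
      intro β hβ
      have h1 := hβ.1
      rw [Set.mem_singleton_iff]
      funext s
      have := congrFun h1 s
      simpa [trunc] using this.symm
    · by_contra hinf
      have hinf' : (hironakaA Δ i).Infinite := hinf
      obtain f := hinf'.natEmbedding
      obtain ⟨g, hg⟩ := (Set.isPWO_of_wellQuasiOrderedLE (α := Fin n → ℕ)
        Set.univ).exists_monotone_subseq
        (f := fun m => (f m : Fin n → ℕ)) (fun _ => Set.mem_univ _)
      set h : ℕ → Fin n → ℕ := fun m => (f (g m) : Fin n → ℕ) with hdef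
      have hmono : Monotone h := hg
      have hinj : Function.Injective h :=
        Subtype.coe_injective.comp (f.injective.comp g.injective)
      have hmem : ∀ m, h m ∈ hironakaA Δ i := fun m => (f (g m)).2
      have hub : ∃ t : Fin n, ∀ B, ∃ m, B < h m t := by
        by_contra hb
        push_neg at hb
        choose B hB using hb
        have hsub : Set.range h ⊆ Set.pi Set.univ (fun t => Set.Iic (B t)) := by
          rintro _ ⟨m, rfl⟩ t _
          exact hB t m
        have hfin : (Set.pi Set.univ fun t => Set.Iic (B t)).Finite :=
          Set.Finite.pi (fun t => Set.finite_Iic _)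
        exact (Set.infinite_range_of_injective hinj) (hfin.subset hsub)
      obtain ⟨t, hubt⟩ := hub
      have htn : (t : ℕ) < i := by
        by_contra hti
        obtain ⟨m, hm⟩ := hubt 0
        have := congrFun (hmem m).1 t
        simp only [trunc, if_neg hti] at this
        omega
      have hi0 : i ≠ 0 := by omega
      have h2 := (hmem 0).2.1.resolve_left hi0
      obtain ⟨δ, hδ, hδeq⟩ := h2
      by_cases hcase : (t : ℕ) = i - 1
      · -- unbounded coordinate is the last one
        obtain ⟨m, hm⟩ := hubt (δ t)
        have hle : ∀ s, trunc i δ s ≤ h m s := by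
          intro s
          by_cases hs : (s : ℕ) < i
          · rw [show trunc i δ s = δ s from if_pos hs]
            by_cases hs' : (s : ℕ) < i - 1
            · have : δ s = h 0 s := by
                have := congrFun hδeq s
                simpa [trunc, hs'] using this
              rw [this]
              exact hmono (Nat.zero_le m) s
            · have hst : s = t := Fin.ext (by omega)
              rw [hst]
              exact le_of_lt hm
          · rw [show trunc i δ s = 0 from if_neg hs]
            exact Nat.zero_le _
        exact (hmem m).2.2
          (mem_trunc_image_of_le hΔ ⟨δ, hδ, rfl⟩ (hmem m).1 hle)
      · -- unbounded coordinate is an earlier one: use finite type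
        have ht' : (t : ℕ) < i - 1 := by omega
        have htd : (t : ℕ) < n - (n - (i - 1)) := by omega
        obtain ⟨a, δ', hδ', heq, hta, hzero⟩ := zero_tail hft t (n - (i - 1)) δ hδ htd
        have hnd : n - (n - (i - 1)) = i - 1 := by omega
        have hδ'img : δ' ∈ trunc i '' Δ := by
          refine ⟨δ', hδ', ?_⟩
          funext s
          by_cases hs : (s : ℕ) < i
          · exact if_pos hs
          · rw [show trunc i δ' s = 0 from if_neg hs]
            exact (hzero s (by omega)).symm
        obtain ⟨m, hm⟩ := hubt (δ t + a)
        have hle : ∀ s, δ' s ≤ h m s := by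
          intro s
          by_cases hs : (s : ℕ) < i - 1
          · by_cases hst : s = t
            · rw [hst, hta]
              exact le_of_lt hm
            · rw [heq s (by omega) hst]
              have : δ s = h 0 s := by
                have := congrFun hδeq s
                simpa [trunc, hs] using this
              rw [this]
              exact hmono (Nat.zero_le m) s
          · rw [hzero s (by omega)]
            exact Nat.zero_le _
        exact (hmem m).2.2
          (mem_trunc_image_of_le hΔ hδ'img (hmem m).1 hle)
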